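/- Let V be a finite-dimensional vector space over K with φ ∈ End(V) singular, and let V = V_R ⊕ V_N be the Fitting decomposition of φ (φ bijective on V_R, nilpotent on V_N). Let μ : V ⊗ V → V be bilinear and write μ = μ_R + μ_N according to the decomposition of the target. Then the limit as t → 0 of (φ + t·id)^{-1} ∘ μ ∘ ((φ + t·id) ⊗ (φ + t·id)) exists if and only if φ² ∘ μ_N − φ ∘ μ_N ∘ (φ ⊗ id) − φ ∘ μ_N ∘ (id ⊗ φ) + μ_N ∘ (φ ⊗ φ) = 0, and in that case the limit equals φ_R^{-1} ∘ μ_R ∘ (φ ⊗ φ) + μ_N ∘ (φ ⊗ id) + μ_N ∘ (id ⊗ φ) − φ ∘ μ_N. -/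

import Mathlib

open Filter Topology TensorProduct

set_option maxHeartbeats 1000000
set_option synthInstance.maxHeartbeats 400000

/-- degeneration of an algebra.  Let `φ` be a singular
endomorphism of a finite-dimensional space `V` with Fitting decomposition
`V = V_R ⊕ V_N` (projections `piR`, `piN`; `φ` invertible on `V_R` with
inverse `ψ`, nilpotent on `V_N`), `μ : V ⊗ V → V` bilinear, and
`f_t = φ + t·id` with inverses `inv t` for small `t ≠ 0`.  Then
`lim_{t→0} f_t⁻¹ ∘ μ ∘ (f_t ⊗ f_t)` exists iff
`φ²∘μ_N − φ∘μ_N∘(φ⊗id) − φ∘μ_N∘(id⊗φ) + μ_N∘(φ⊗φ) = 0`, and in that case the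
limit is `φ_R⁻¹∘μ_R∘(φ⊗φ) + μ_N∘(φ⊗id) + μ_N∘(id⊗φ) − φ∘μ_N`. -/
theorem stmt_14 {V : Type*} [NormedAddCommGroup V] [NormedSpace ℂ V]
    [FiniteDimensional ℂ V]
    (φ : Module.End ℂ V) (hsing : ¬ Function.Bijective φ)
    (R N : Submodule ℂ V) (hcompl : IsCompl R N)
    (hRinv : ∀ v ∈ R, φ v ∈ R) (hNinv : ∀ v ∈ N, φ v ∈ N)
    (q : ℕ) (hq : ∀ v ∈ N, (φ ^ q) v = 0)
    (piR piN : V →ₗ[ℂ] V) (hsum : piR + piN = LinearMap.id)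
    (hpiR : ∀ v, piR v ∈ R) (hpiN : ∀ v, piN v ∈ N)
    (hpiR_id : ∀ v ∈ R, piR v = v) (hpiN_id : ∀ v ∈ N, piN v = v)
    (ψ : V →ₗ[ℂ] V) (hψmem : ∀ v ∈ R, ψ v ∈ R)
    (hψ_right : ∀ v ∈ R, φ (ψ v) = v) (hψ_left : ∀ v ∈ R, ψ (φ v) = v)
    (μ : V ⊗[ℂ] V →ₗ[ℂ] V)
    (inv : ℂ → (V →ₗ[ℂ] V))
    (hinv : ∀ᶠ t in 𝓝[≠] (0 : ℂ),
      (inv t) ∘ₗ (φ + t • (1 : Module.End ℂ V)) = LinearMap.id ∧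
      (φ + t • (1 : Module.End ℂ V)) ∘ₗ (inv t) = LinearMap.id) :
    ((∀ x y : V, ∃ L : V, Tendsto
        (fun t : ℂ => inv t (μ (((φ + t • (1 : Module.End ℂ V)) x) ⊗ₜ
          ((φ + t • (1 : Module.End ℂ V)) y))))
        (𝓝[≠] 0) (𝓝 L)) ↔
      φ ∘ₗ φ ∘ₗ (piN ∘ₗ μ)
        - φ ∘ₗ (piN ∘ₗ μ) ∘ₗ TensorProduct.map (φ : V →ₗ[ℂ] V) LinearMap.id
        - φ ∘ₗ (piN ∘ₗ μ) ∘ₗ TensorProduct.map LinearMap.id (φ : V →ₗ[ℂ] V)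
        + (piN ∘ₗ μ) ∘ₗ TensorProduct.map (φ : V →ₗ[ℂ] V) (φ : V →ₗ[ℂ] V) = 0) ∧
    ((φ ∘ₗ φ ∘ₗ (piN ∘ₗ μ)
        - φ ∘ₗ (piN ∘ₗ μ) ∘ₗ TensorProduct.map (φ : V →ₗ[ℂ] V) LinearMap.id
        - φ ∘ₗ (piN ∘ₗ μ) ∘ₗ TensorProduct.map LinearMap.id (φ : V →ₗ[ℂ] V)
        + (piN ∘ₗ μ) ∘ₗ TensorProduct.map (φ : V →ₗ[ℂ] V) (φ : V →ₗ[ℂ] V) = 0) →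
      ∀ x y : V, Tendsto
        (fun t : ℂ => inv t (μ (((φ + t • (1 : Module.End ℂ V)) x) ⊗ₜ
          ((φ + t • (1 : Module.End ℂ V)) y))))
        (𝓝[≠] 0)
        (𝓝 (ψ (piR (μ (φ x ⊗ₜ φ y))) + piN (μ (φ x ⊗ₜ y)) + piN (μ (x ⊗ₜ φ y))
            - φ (piN (μ (x ⊗ₜ y)))))) := by
  classical
  have hne : ∀ᶠ t : ℂ in 𝓝[≠] (0:ℂ), t ≠ 0 := eventually_mem_nhdsWithin
  -- split of the identity
  have hsplit : ∀ w : V, piR w + piN w = w := by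
    intro w
    have := LinearMap.ext_iff.mp hsum w
    simpa using this
  -- pointwise description of f_t
  have happ : ∀ (t : ℂ) (w : V), (φ + t • (1 : Module.End ℂ V)) w = φ w + t • w := by
    intro t w; simp
  -- left-inverse property, pointwise
  have hcomp : ∀ᶠ t in 𝓝[≠] (0:ℂ), ∀ w : V,
      inv t ((φ + t • (1 : Module.End ℂ V)) w) = w := by
    filter_upwards [hinv] with t hti w
    have := LinearMap.ext_iff.mp hti.1 w
    simpa using this
  ------------------------------------------------------------------
  -- series formula for `inv t` on nilpotent vectors
  ------------------------------------------------------------------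
  have hser : ∀ (m : ℕ) (v : V), (φ ^ m) v = 0 →
      ∀ᶠ t in 𝓝[≠] (0:ℂ), inv t v
        = ∑ k ∈ Finset.range m, ((-1:ℂ)^k * (t⁻¹)^(k+1)) • (φ ^ k) v := by
    intro m v hv
    filter_upwards [hcomp, hne] with t hcompt ht0
    have hterm : ∀ k : ℕ, (φ + t • (1 : Module.End ℂ V)) (((-1:ℂ)^k * (t⁻¹)^(k+1)) • (φ ^ k) v)
        = (fun k : ℕ => ((-1:ℂ)^k * (t⁻¹)^k) • (φ ^ k) v) k
          - (fun k : ℕ => ((-1:ℂ)^k * (t⁻¹)^k) • (φ ^ k) v) (k+1) := by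
      intro k
      have h2 : (φ ^ (k+1)) v = φ ((φ ^ k) v) := by
        rw [pow_succ', Module.End.mul_apply]
      simp only [happ, map_smul, h2]
      match_scalars
      · field_simp
        ring
      · field_simp
        ring
        rw [mul_inv_cancel₀ ht0, one_mul]
    have key : (φ + t • (1 : Module.End ℂ V))
        (∑ k ∈ Finset.range m, ((-1:ℂ)^k * (t⁻¹)^(k+1)) • (φ ^ k) v) = v := by
      rw [map_sum]
      rw [Finset.sum_congr rfl fun k _ => hterm k, Finset.sum_range_sub']
      simp [hv]
    conv_lhs => rw [← key]
    exact hcompt _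
  ------------------------------------------------------------------
  -- nilpotent vectors with convergent `inv t v` vanish
  ------------------------------------------------------------------
  have nilp : ∀ (m : ℕ) (v : V), (φ ^ m) v = 0 →
      ∀ L : V, Tendsto (fun t : ℂ => inv t v) (𝓝[≠] (0:ℂ)) (𝓝 L) → v = 0 := by
    intro m
    induction m with
    | zero => intro v hv L _; simpa using hv
    | succ m ih =>
      intro v hv L hL
      have hpow0 : Tendsto (fun t : ℂ => t^(m+1)) (𝓝[≠] (0:ℂ)) (𝓝 (0:ℂ)) :=
        ((continuous_pow (m+1)).tendsto' 0 0 (by simp)).mono_left nhdsWithin_le_nhds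
      have h1 : Tendsto (fun t : ℂ => t^(m+1) • inv t v) (𝓝[≠] (0:ℂ)) (𝓝 (0:V)) := by
        simpa using hpow0.smul hL
      have h2cont : Continuous (fun t : ℂ =>
          ∑ k ∈ Finset.range (m+1), ((-1:ℂ)^k * t^(m-k)) • (φ^k) v) :=
        continuous_finset_sum _ fun k _ =>
          (continuous_const.mul (continuous_pow _)).smul continuous_const
      have h2val : ∑ k ∈ Finset.range (m+1), ((-1:ℂ)^k * (0:ℂ)^(m-k)) • (φ^k) v
          = (-1:ℂ)^m • (φ^m) v := by
        rw [Finset.sum_eq_single m]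
        · simp
        · intro k hk hkm
          have hk' : m - k ≠ 0 := by
            have := Finset.mem_range.mp hk; omega
          simp [zero_pow hk']
        · intro h; exact absurd (Finset.self_mem_range_succ m) h
      have h2 : Tendsto (fun t : ℂ =>
          ∑ k ∈ Finset.range (m+1), ((-1:ℂ)^k * t^(m-k)) • (φ^k) v)
          (𝓝[≠] (0:ℂ)) (𝓝 ((-1:ℂ)^m • (φ^m) v)) :=
        (h2cont.tendsto' 0 _ h2val).mono_left nhdsWithin_le_nhds
      have heq : ∀ᶠ t : ℂ in 𝓝[≠] (0:ℂ), t^(m+1) • inv t v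
          = ∑ k ∈ Finset.range (m+1), ((-1:ℂ)^k * t^(m-k)) • (φ^k) v := by
        filter_upwards [hser (m+1) v hv, hne] with t hs ht0
        rw [hs, Finset.smul_sum]
        refine Finset.sum_congr rfl fun k hk => ?_
        rw [smul_smul]
        congr 1
        have hk' : k ≤ m := Nat.lt_succ_iff.mp (Finset.mem_range.mp hk)
        have hsplit' : m + 1 = (m - k) + (k + 1) := by omega
        rw [inv_pow, show t^(m+1) = t^(m-k) * t^(k+1) by rw [← pow_add, ← hsplit']]
        field_simp
      have h0 : (0:V) = (-1:ℂ)^m • (φ^m) v :=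
        tendsto_nhds_unique (h1.congr' heq) h2
      have hφm : (φ^m) v = 0 := by
        have hne1 : ((-1:ℂ)^m) ≠ 0 := by
          simp
        have := h0.symm
        rcases smul_eq_zero.mp this with h | h
        · exact absurd h hne1
        · exact h
      exact ih v hφm L hL
  ------------------------------------------------------------------
  -- machinery on R
  ------------------------------------------------------------------
  have hRt : ∀ t : ℂ, ∀ v ∈ R, (φ + t • (1 : Module.End ℂ V)) v ∈ R := by
    intro t v hv
    rw [happ]
    exact R.add_mem (hRinv v hv) (R.smul_mem t hv)
  set A : ℂ → (R →L[ℂ] R) := fun t =>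
    LinearMap.toContinuousLinearMap
      (LinearMap.restrict (φ + t • (1 : Module.End ℂ V)) (hRt t)) with hAdef
  set PsiR : R →L[ℂ] R :=
    LinearMap.toContinuousLinearMap (LinearMap.restrict ψ hψmem) with hPsiRdef
  have hAapp : ∀ (t : ℂ) (v : R), ((A t v : R) : V) = φ (v : V) + t • (v : V) := by
    intro t v
    rw [hAdef]
    simp [LinearMap.restrict_apply]
  have hPsiapp : ∀ v : R, ((PsiR v : R) : V) = ψ (v : V) := by
    intro v
    rw [hPsiRdef]
    simp [LinearMap.restrict_apply]
  have h1 : A 0 * PsiR = 1 := by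
    ext v
    rw [ContinuousLinearMap.mul_apply, hAapp, hPsiapp]
    simp [hψ_right _ v.2]
  have h2 : PsiR * A 0 = 1 := by
    ext v
    rw [ContinuousLinearMap.mul_apply, hPsiapp]
    have : ((A 0 v : R) : V) = φ (v : V) := by rw [hAapp]; simp
    rw [this]
    simp [hψ_left _ v.2]
  set u0 : (R →L[ℂ] R)ˣ := ⟨A 0, PsiR, h1, h2⟩ with hu0def
  have hA0unit : IsUnit (A 0) := ⟨u0, rfl⟩
  have hAfun : A = fun t => A 0 + t • (1 : R →L[ℂ] R) := by
    funext t
    ext v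
    simp only [ContinuousLinearMap.add_apply, ContinuousLinearMap.smul_apply,
      ContinuousLinearMap.one_apply, Submodule.coe_add, SetLike.val_smul, hAapp]
    simp
  have hAcont : Continuous A := by
    rw [hAfun]
    exact continuous_const.add (continuous_id.smul continuous_const)
  have hAunit : ∀ᶠ t : ℂ in 𝓝 0, IsUnit (A t) := by
    have hopen : IsOpen {x : R →L[ℂ] R | IsUnit x} := Units.isOpen (R := R →L[ℂ] R)
    exact hAcont.continuousAt.eventually_mem (hopen.mem_nhds hA0unit)
  have hAunitl : ∀ᶠ t : ℂ in 𝓝[≠] (0:ℂ), IsUnit (A t) :=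
    hAunit.filter_mono nhdsWithin_le_nhds
  have hinvA : ContinuousAt (fun t : ℂ => Ring.inverse (A t)) 0 := by
    have h : ContinuousAt Ring.inverse (A 0) := NormedRing.inverse_continuousAt (R := R →L[ℂ] R) u0
    exact h.comp hAcont.continuousAt
  have hRinv0 : Ring.inverse (A 0) = PsiR := by
    have : Ring.inverse ((u0 : (R →L[ℂ] R)ˣ) : R →L[ℂ] R) = ((u0⁻¹ : (R →L[ℂ] R)ˣ) : R →L[ℂ] R) :=
      Ring.inverse_unit u0
    simpa [hu0def] using this
  ------------------------------------------------------------------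
  -- the key decomposition, for fixed x y
  ------------------------------------------------------------------
  set Dm : V → V → V := fun x y =>
    piN (μ (φ x ⊗ₜ[ℂ] φ y)) - φ (piN (μ (φ x ⊗ₜ[ℂ] y))) - φ (piN (μ (x ⊗ₜ[ℂ] φ y)))
      + φ (φ (piN (μ (x ⊗ₜ[ℂ] y)))) with hDm
  have key : ∀ x y : V, ∃ g : ℂ → V,
      (∀ᶠ t : ℂ in 𝓝[≠] (0:ℂ),
        inv t (μ (((φ + t • (1 : Module.End ℂ V)) x) ⊗ₜ ((φ + t • (1 : Module.End ℂ V)) y)))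
          = g t + inv t (Dm x y)) ∧
      Tendsto g (𝓝[≠] (0:ℂ))
        (𝓝 (ψ (piR (μ (φ x ⊗ₜ φ y))) + piN (μ (φ x ⊗ₜ y)) + piN (μ (x ⊗ₜ φ y))
            - φ (piN (μ (x ⊗ₜ y))))) := by
    intro x y
    have hmem : ∀ t : ℂ, piR (μ (φ x ⊗ₜ[ℂ] φ y)) + t • piR (μ (φ x ⊗ₜ[ℂ] y))
        + t • piR (μ (x ⊗ₜ[ℂ] φ y)) + (t*t) • piR (μ (x ⊗ₜ[ℂ] y)) ∈ R := fun t =>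
      R.add_mem (R.add_mem (R.add_mem (hpiR _) (R.smul_mem _ (hpiR _)))
        (R.smul_mem _ (hpiR _))) (R.smul_mem _ (hpiR _))
    refine ⟨fun t => ((Ring.inverse (A t)) (⟨_, hmem t⟩ : R) : V)
      + ((piN (μ (φ x ⊗ₜ[ℂ] y)) + piN (μ (x ⊗ₜ[ℂ] φ y)) - φ (piN (μ (x ⊗ₜ[ℂ] y))))
          + t • piN (μ (x ⊗ₜ[ℂ] y))), ?_, ?_⟩
    · -- eventual equality
      filter_upwards [hcomp, hAunitl] with t hcompt hu
      -- expansion of the tensor argument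
      have hexp : μ (((φ + t • (1 : Module.End ℂ V)) x) ⊗ₜ[ℂ] ((φ + t • (1 : Module.End ℂ V)) y))
          = μ (φ x ⊗ₜ[ℂ] φ y) + t • μ (φ x ⊗ₜ[ℂ] y) + t • μ (x ⊗ₜ[ℂ] φ y)
            + (t*t) • μ (x ⊗ₜ[ℂ] y) := by
        rw [happ, happ, TensorProduct.add_tmul, TensorProduct.tmul_add, TensorProduct.tmul_add]
        simp only [TensorProduct.tmul_smul, TensorProduct.smul_tmul', map_add, map_smul,
          smul_smul, ← TensorProduct.smul_tmul']
        module
      rw [hexp]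
      set w : V := μ (φ x ⊗ₜ[ℂ] φ y) + t • μ (φ x ⊗ₜ[ℂ] y) + t • μ (x ⊗ₜ[ℂ] φ y)
        + (t*t) • μ (x ⊗ₜ[ℂ] y) with hw
      have hwsplit : w = (piR (μ (φ x ⊗ₜ[ℂ] φ y)) + t • piR (μ (φ x ⊗ₜ[ℂ] y))
            + t • piR (μ (x ⊗ₜ[ℂ] φ y)) + (t*t) • piR (μ (x ⊗ₜ[ℂ] y)))
          + (piN (μ (φ x ⊗ₜ[ℂ] φ y)) + t • piN (μ (φ x ⊗ₜ[ℂ] y))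
            + t • piN (μ (x ⊗ₜ[ℂ] φ y)) + (t*t) • piN (μ (x ⊗ₜ[ℂ] y))) := by
        conv_lhs => rw [hw, ← hsplit (μ (φ x ⊗ₜ[ℂ] φ y)), ← hsplit (μ (φ x ⊗ₜ[ℂ] y)),
          ← hsplit (μ (x ⊗ₜ[ℂ] φ y)), ← hsplit (μ (x ⊗ₜ[ℂ] y))]
        module
      -- R part
      have hRpart : inv t (piR (μ (φ x ⊗ₜ[ℂ] φ y)) + t • piR (μ (φ x ⊗ₜ[ℂ] y))
            + t • piR (μ (x ⊗ₜ[ℂ] φ y)) + (t*t) • piR (μ (x ⊗ₜ[ℂ] y)))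
          = ((Ring.inverse (A t)) (⟨_, hmem t⟩ : R) : V) := by
        have h5 : (A t) ((Ring.inverse (A t)) (⟨_, hmem t⟩ : R)) = (⟨_, hmem t⟩ : R) := by
          have hmul := Ring.mul_inverse_cancel (A t) hu
          calc (A t) ((Ring.inverse (A t)) (⟨_, hmem t⟩ : R))
              = ((A t) * Ring.inverse (A t)) (⟨_, hmem t⟩ : R) := rfl
            _ = (⟨_, hmem t⟩ : R) := by rw [hmul]; rfl
        have h6 : (φ + t • (1 : Module.End ℂ V)) ((Ring.inverse (A t)) (⟨_, hmem t⟩ : R) : V)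
            = piR (μ (φ x ⊗ₜ[ℂ] φ y)) + t • piR (μ (φ x ⊗ₜ[ℂ] y))
              + t • piR (μ (x ⊗ₜ[ℂ] φ y)) + (t*t) • piR (μ (x ⊗ₜ[ℂ] y)) := by
          have := congrArg (Subtype.val) h5
          rw [hAapp] at this
          rw [happ]
          exact this
        conv_lhs => rw [← h6]
        exact hcompt _
      -- N part
      have hNid : piN (μ (φ x ⊗ₜ[ℂ] φ y)) + t • piN (μ (φ x ⊗ₜ[ℂ] y))
            + t • piN (μ (x ⊗ₜ[ℂ] φ y)) + (t*t) • piN (μ (x ⊗ₜ[ℂ] y))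
          = (φ + t • (1 : Module.End ℂ V))
              ((piN (μ (φ x ⊗ₜ[ℂ] y)) + piN (μ (x ⊗ₜ[ℂ] φ y)) - φ (piN (μ (x ⊗ₜ[ℂ] y))))
                + t • piN (μ (x ⊗ₜ[ℂ] y)))
            + Dm x y := by
        rw [happ, hDm]
        simp only [map_add, map_sub, map_smul]
        module
      have hNpart : inv t (piN (μ (φ x ⊗ₜ[ℂ] φ y)) + t • piN (μ (φ x ⊗ₜ[ℂ] y))
            + t • piN (μ (x ⊗ₜ[ℂ] φ y)) + (t*t) • piN (μ (x ⊗ₜ[ℂ] y)))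
          = ((piN (μ (φ x ⊗ₜ[ℂ] y)) + piN (μ (x ⊗ₜ[ℂ] φ y)) - φ (piN (μ (x ⊗ₜ[ℂ] y))))
                + t • piN (μ (x ⊗ₜ[ℂ] y))) + inv t (Dm x y) := by
        rw [hNid, map_add, hcompt]
      rw [hwsplit, map_add, hRpart, hNpart]
      abel
    · -- convergence of g
      have hracont : Continuous (fun t : ℂ => (⟨piR (μ (φ x ⊗ₜ[ℂ] φ y))
            + t • piR (μ (φ x ⊗ₜ[ℂ] y)) + t • piR (μ (x ⊗ₜ[ℂ] φ y))
            + (t*t) • piR (μ (x ⊗ₜ[ℂ] y)), hmem t⟩ : R)) := by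
        apply Continuous.subtype_mk
        fun_prop
      have h1c : ContinuousAt (fun t : ℂ => (Ring.inverse (A t)) (⟨_, hmem t⟩ : R)) 0 := by
        exact (isBoundedBilinearMap_apply.continuous.continuousAt).comp
          (hinvA.prodMk hracont.continuousAt)
      have hra0 : (⟨piR (μ (φ x ⊗ₜ[ℂ] φ y)) + (0:ℂ) • piR (μ (φ x ⊗ₜ[ℂ] y))
            + (0:ℂ) • piR (μ (x ⊗ₜ[ℂ] φ y)) + ((0:ℂ)*(0:ℂ)) • piR (μ (x ⊗ₜ[ℂ] y)),
            hmem 0⟩ : R) = ⟨piR (μ (φ x ⊗ₜ[ℂ] φ y)), hpiR _⟩ := by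
        apply Subtype.ext; simp
      have hval : (((Ring.inverse (A 0)) (⟨_, hmem 0⟩ : R) : R) : V)
          = ψ (piR (μ (φ x ⊗ₜ[ℂ] φ y))) := by
        rw [hra0, hRinv0, hPsiapp]
      have hT1 : Tendsto (fun t : ℂ => ((Ring.inverse (A t)) (⟨_, hmem t⟩ : R) : V))
          (𝓝[≠] (0:ℂ)) (𝓝 (ψ (piR (μ (φ x ⊗ₜ φ y))))) := by
        have h := (continuous_subtype_val.continuousAt.comp h1c).tendsto
        simp only [Function.comp_def] at h
        rw [hval] at h
        exact h.mono_left nhdsWithin_le_nhds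
      have hT2 : Tendsto (fun t : ℂ => (piN (μ (φ x ⊗ₜ[ℂ] y)) + piN (μ (x ⊗ₜ[ℂ] φ y))
            - φ (piN (μ (x ⊗ₜ[ℂ] y)))) + t • piN (μ (x ⊗ₜ[ℂ] y)))
          (𝓝[≠] (0:ℂ)) (𝓝 (piN (μ (φ x ⊗ₜ[ℂ] y)) + piN (μ (x ⊗ₜ[ℂ] φ y))
            - φ (piN (μ (x ⊗ₜ[ℂ] y))))) := by
        have hc : Continuous (fun t : ℂ => (piN (μ (φ x ⊗ₜ[ℂ] y)) + piN (μ (x ⊗ₜ[ℂ] φ y))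
            - φ (piN (μ (x ⊗ₜ[ℂ] y)))) + t • piN (μ (x ⊗ₜ[ℂ] y))) := by fun_prop
        exact (hc.tendsto' 0 _ (by simp)).mono_left nhdsWithin_le_nhds
      have := hT1.add hT2
      convert this using 2
      abel
  ------------------------------------------------------------------
  -- the operator applied to a pure tensor is `Dm x y`
  ------------------------------------------------------------------
  have hTD : ∀ x y : V, (φ ∘ₗ φ ∘ₗ (piN ∘ₗ μ)
        - φ ∘ₗ (piN ∘ₗ μ) ∘ₗ TensorProduct.map (φ : V →ₗ[ℂ] V) LinearMap.id
        - φ ∘ₗ (piN ∘ₗ μ) ∘ₗ TensorProduct.map LinearMap.id (φ : V →ₗ[ℂ] V)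
        + (piN ∘ₗ μ) ∘ₗ TensorProduct.map (φ : V →ₗ[ℂ] V) (φ : V →ₗ[ℂ] V)) (x ⊗ₜ[ℂ] y)
      = Dm x y := by
    intro x y
    rw [hDm]
    simp only [LinearMap.sub_apply, LinearMap.add_apply, LinearMap.comp_apply,
      TensorProduct.map_tmul, LinearMap.id_coe, id_eq]
    abel
  have hDmN : ∀ x y : V, (φ ^ q) (Dm x y) = 0 := by
    intro x y
    refine hq _ ?_
    rw [hDm]
    exact N.add_mem (N.sub_mem (N.sub_mem (hpiN _) (hNinv _ (hpiN _))) (hNinv _ (hpiN _)))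
      (hNinv _ (hNinv _ (hpiN _)))
  ------------------------------------------------------------------
  -- assembly
  ------------------------------------------------------------------
  have bwd : (φ ∘ₗ φ ∘ₗ (piN ∘ₗ μ)
        - φ ∘ₗ (piN ∘ₗ μ) ∘ₗ TensorProduct.map (φ : V →ₗ[ℂ] V) LinearMap.id
        - φ ∘ₗ (piN ∘ₗ μ) ∘ₗ TensorProduct.map LinearMap.id (φ : V →ₗ[ℂ] V)
        + (piN ∘ₗ μ) ∘ₗ TensorProduct.map (φ : V →ₗ[ℂ] V) (φ : V →ₗ[ℂ] V) = 0) →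
      ∀ x y : V, Tendsto
        (fun t : ℂ => inv t (μ (((φ + t • (1 : Module.End ℂ V)) x) ⊗ₜ
          ((φ + t • (1 : Module.End ℂ V)) y))))
        (𝓝[≠] 0)
        (𝓝 (ψ (piR (μ (φ x ⊗ₜ φ y))) + piN (μ (φ x ⊗ₜ y)) + piN (μ (x ⊗ₜ φ y))
            - φ (piN (μ (x ⊗ₜ y))))) := by
    intro hT0 x y
    obtain ⟨g, hev, hg⟩ := key x y
    have hD0 : Dm x y = 0 := by
      rw [← hTD x y, hT0, LinearMap.zero_apply]
    apply hg.congr'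
    filter_upwards [hev] with t ht
    rw [ht, hD0, map_zero, add_zero]
  refine ⟨⟨?_, fun h x y => ⟨_, bwd h x y⟩⟩, bwd⟩
  intro hall
  refine TensorProduct.ext' ?_
  intro x y
  obtain ⟨g, hev, hg⟩ := key x y
  obtain ⟨L, hL⟩ := hall x y
  have hDlim : Tendsto (fun t : ℂ => inv t (Dm x y)) (𝓝[≠] (0:ℂ))
      (𝓝 (L - (ψ (piR (μ (φ x ⊗ₜ φ y))) + piN (μ (φ x ⊗ₜ y)) + piN (μ (x ⊗ₜ φ y))
            - φ (piN (μ (x ⊗ₜ y)))))) := by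
    apply (hL.sub hg).congr'
    filter_upwards [hev] with t ht
    rw [ht]
    abel
  have hD0 := nilp q (Dm x y) (hDmN x y) _ hDlim
  rw [LinearMap.zero_apply, hTD x y, hD0]
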